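/- Let N, d0, d1, d2 be positive integers, X ∈ ℝ^{N×d0}, Y ∈ ℝ^{N×d2}, and T ∈ (0,∞]. Let W : [0,T) → ℝ^{d0×d1} and V : [0,T) → ℝ^{d1×d2} be absolutely continuous curves satisfying, for a.e. s ∈ [0,T), ‖W'(s)‖_F ≤ ‖X‖_op ‖V(s)‖_F √(2 L(s)) and ‖V'(s)‖_F ≤ ‖X‖_op ‖W(s)‖_F √(2 L(s)). Set c₁ = 2√2 ‖X‖_op² ‖V(0)‖_F, c₂ = 2 ‖X‖_op³ ‖W(0)‖_F, and c = ‖X‖_op². Then for every t ∈ [0,T): ‖X‖_op · ‖W(t)−W(0)‖_F ≤ (1/2) · (c₁ L̄(t) + c₂ L̄(t)²) · exp(c · L̄(t)²), where L̄(t) = ∫₀ᵗ √(L(s)) ds. -/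

import Mathlib

open MeasureTheory ProbabilityTheory
open scoped ENNReal

noncomputable section

/-- The ReLU function. -/
def relu (x : ℝ) : ℝ := max x 0

/-- Frobenius norm of a real matrix. -/
def frob {m n : ℕ} (A : Matrix (Fin m) (Fin n) ℝ) : ℝ :=
  Real.sqrt (∑ i, ∑ j, (A i j) ^ 2)

/-- ℓ²→ℓ² operator norm of a real matrix. -/
def opNorm {m n : ℕ} (A : Matrix (Fin m) (Fin n) ℝ) : ℝ :=
  ‖LinearMap.toContinuousLinearMap (Matrix.toEuclideanLin A)‖

/-- The MSE loss `L(W,V) = (1/2)‖Y − φ(XW)V‖_F²`. -/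
def mseLoss {N d0 d1 d2 : ℕ} (X : Matrix (Fin N) (Fin d0) ℝ) (Y : Matrix (Fin N) (Fin d2) ℝ)
    (W : Matrix (Fin d0) (Fin d1) ℝ) (V : Matrix (Fin d1) (Fin d2) ℝ) : ℝ :=
  (1 / 2) * (frob (Y - ((X * W).map relu) * V)) ^ 2


open MeasureTheory intervalIntegral Set
set_option maxHeartbeats 1000000

lemma frob_nonneg {m n : ℕ} (A : Matrix (Fin m) (Fin n) ℝ) : 0 ≤ frob A := Real.sqrt_nonneg _

lemma frob_sq {m n : ℕ} (A : Matrix (Fin m) (Fin n) ℝ) : frob A ^ 2 = ∑ i, ∑ j, (A i j) ^ 2 :=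
  Real.sq_sqrt (by positivity)

lemma frob_inner_le {m n : ℕ} (A B : Matrix (Fin m) (Fin n) ℝ) :
    ∑ i, ∑ j, A i j * B i j ≤ frob A * frob B := by
  have h := Finset.sum_mul_sq_le_sq_mul_sq Finset.univ (fun p : Fin m × Fin n => A p.1 p.2)
    (fun p : Fin m × Fin n => B p.1 p.2)
  have h2 : ∑ i, ∑ j, A i j * B i j = ∑ p : Fin m × Fin n, A p.1 p.2 * B p.1 p.2 := by
    rw [Fintype.sum_prod_type]
  rw [h2]
  calc ∑ p : Fin m × Fin n, A p.1 p.2 * B p.1 p.2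
      ≤ |∑ p : Fin m × Fin n, A p.1 p.2 * B p.1 p.2| := le_abs_self _
    _ = Real.sqrt ((∑ p : Fin m × Fin n, A p.1 p.2 * B p.1 p.2) ^ 2) := (Real.sqrt_sq_eq_abs _).symm
    _ ≤ Real.sqrt ((∑ p : Fin m × Fin n, A p.1 p.2 ^ 2) * ∑ p : Fin m × Fin n, B p.1 p.2 ^ 2) :=
        Real.sqrt_le_sqrt h
    _ = frob A * frob B := by
        rw [Real.sqrt_mul (by positivity)]
        unfold frob
        rw [Fintype.sum_prod_type (f := fun p : Fin m × Fin n => A p.1 p.2 ^ 2),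
          Fintype.sum_prod_type (f := fun p : Fin m × Fin n => B p.1 p.2 ^ 2)]

lemma frob_add_le {m n : ℕ} (A B : Matrix (Fin m) (Fin n) ℝ) :
    frob (A + B) ≤ frob A + frob B := by
  have hsq : frob (A + B) ^ 2 ≤ (frob A + frob B) ^ 2 := by
    rw [frob_sq]
    have : ∑ i, ∑ j, ((A + B) i j) ^ 2
        = (∑ i, ∑ j, (A i j)^2) + 2 * (∑ i, ∑ j, A i j * B i j) + (∑ i, ∑ j, (B i j)^2) := by
      simp only [Matrix.add_apply, Finset.mul_sum, ← Finset.sum_add_distrib]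
      congr 1; ext i; congr 1; ext j; ring
    rw [this, ← frob_sq A, ← frob_sq B]
    have := frob_inner_le A B
    nlinarith [frob_nonneg A, frob_nonneg B]
  nlinarith [frob_nonneg (A + B), frob_nonneg A, frob_nonneg B]

lemma intervalIntegrable_sum' {ι : Type*} [Fintype ι] {f : ι → ℝ → ℝ} {a b : ℝ}
    (h : ∀ i, IntervalIntegrable (f i) volume a b) :
    IntervalIntegrable (fun s => ∑ i, f i s) volume a b := by
  have := IntervalIntegrable.sum (μ := volume) (a := a) (b := b) Finset.univ (fun i _ => h i)
  simpa [Finset.sum_fn] using this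

lemma frob_sub_le_integral {m n : ℕ} (F F' : ℝ → Matrix (Fin m) (Fin n) ℝ) (t : ℝ) (ht : 0 ≤ t)
    (hint : ∀ i j, IntervalIntegrable (fun s => F' s i j) volume 0 t)
    (hftc : ∀ i j, F t i j - F 0 i j = ∫ s in (0:ℝ)..t, F' s i j)
    (ρ : ℝ → ℝ) (hρ : IntervalIntegrable ρ volume 0 t)
    (hbound : ∀ᵐ s ∂(volume.restrict (Icc 0 t)), frob (F' s) ≤ ρ s) :
    frob (F t - F 0) ≤ ∫ s in (0:ℝ)..t, ρ s := by
  set D := F t - F 0 with hD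
  set u := frob D with hu
  have hu0 : 0 ≤ u := frob_nonneg _
  have hDij : ∀ i j, D i j = ∫ s in (0:ℝ)..t, F' s i j := by
    intro i j; simpa [hD, Matrix.sub_apply] using hftc i j
  have hintsum : IntervalIntegrable (fun s => ∑ i, ∑ j, D i j * F' s i j) volume 0 t :=
    intervalIntegrable_sum' (fun i => intervalIntegrable_sum' (fun j => (hint i j).const_mul _))
  have key : u ^ 2 ≤ ∫ s in (0:ℝ)..t, u * ρ s := by
    have h1 : u ^ 2 = ∑ i, ∑ j, D i j * D i j := by
      rw [hu, frob_sq]; congr 1; ext i; congr 1; ext j; ring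
    have h2 : u ^ 2 = ∫ s in (0:ℝ)..t, ∑ i, ∑ j, D i j * F' s i j := by
      rw [h1]
      rw [intervalIntegral.integral_finset_sum]
      · congr 1; ext i
        rw [intervalIntegral.integral_finset_sum]
        · congr 1; ext j
          rw [intervalIntegral.integral_const_mul, ← hDij i j]
        · intro j _; exact (hint i j).const_mul _
      · intro i _
        exact intervalIntegrable_sum' (fun j => (hint i j).const_mul _)
    rw [h2]
    apply intervalIntegral.integral_mono_ae_restrict ht hintsum (hρ.const_mul u)
    filter_upwards [hbound] with s hs
    calc ∑ i, ∑ j, D i j * F' s i j ≤ frob D * frob (F' s) := frob_inner_le _ _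
      _ ≤ u * ρ s := by
          rcases le_or_gt (frob (F' s)) (ρ s) with h | h
          · exact mul_le_mul_of_nonneg_left (by exact hs) hu0
          · exact absurd hs (not_le.mpr h)
  have hρnn : 0 ≤ ∫ s in (0:ℝ)..t, ρ s := by
    apply intervalIntegral.integral_nonneg_of_ae_restrict ht
    filter_upwards [hbound] with s hs
    exact le_trans (frob_nonneg _) hs
  rcases eq_or_lt_of_le hu0 with h | h
  · rw [← h]; exact hρnn
  · have : u * u ≤ u * ∫ s in (0:ℝ)..t, ρ s := by
      calc u * u = u ^ 2 := by ring
        _ ≤ ∫ s in (0:ℝ)..t, u * ρ s := key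
        _ = u * ∫ s in (0:ℝ)..t, ρ s := intervalIntegral.integral_const_mul _ _
    exact le_of_mul_le_mul_left this h

def primInt (f : ℝ → ℝ) (t : ℝ) : ℝ := ∫ s in (0:ℝ)..t, f s

variable {ℓ : ℝ → ℝ}

lemma primInt_zero (f : ℝ → ℝ) : primInt f 0 = 0 := intervalIntegral.integral_same

lemma hasDerivAt_primInt (hℓ : Continuous ℓ) (s : ℝ) :
    HasDerivAt (primInt ℓ) (ℓ s) s :=
  intervalIntegral.integral_hasDerivAt_right (hℓ.intervalIntegrable _ _)
    (hℓ.stronglyMeasurableAtFilter _ _) hℓ.continuousAt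

lemma continuous_primInt (hℓ : Continuous ℓ) : Continuous (primInt ℓ) :=
  intervalIntegral.continuous_primitive (fun a b => hℓ.intervalIntegrable a b) 0

lemma monotone_primInt (hℓ : Continuous ℓ) (hℓ0 : ∀ s, 0 ≤ ℓ s) : Monotone (primInt ℓ) := by
  intro x y hxy
  have h := intervalIntegral.integral_add_adjacent_intervals
    (hℓ.intervalIntegrable (μ := volume) 0 x) (hℓ.intervalIntegrable x y)
  have h2 : (0:ℝ) ≤ ∫ s in x..y, ℓ s :=
    intervalIntegral.integral_nonneg hxy (fun u _ => hℓ0 u)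
  unfold primInt
  rw [← h]
  linarith

lemma primInt_nonneg (hℓ : Continuous ℓ) (hℓ0 : ∀ s, 0 ≤ ℓ s) {t : ℝ} (ht : 0 ≤ t) :
    0 ≤ primInt ℓ t := by
  have := monotone_primInt hℓ hℓ0 ht
  rwa [primInt_zero] at this

lemma integral_l_Mpow (hℓ : Continuous ℓ) (k : ℕ) (t : ℝ) :
    ∫ s in (0:ℝ)..t, ℓ s * (primInt ℓ s) ^ k
      = (primInt ℓ t) ^ (k+1) / (k+1) := by
  have hd : ∀ s ∈ uIcc (0:ℝ) t,
      HasDerivAt (fun r => (primInt ℓ r) ^ (k+1) / (k+1)) (ℓ s * (primInt ℓ s) ^ k) s := by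
    intro s _
    have h1 := ((hasDerivAt_primInt hℓ s).pow (k+1)).div_const ((k:ℝ)+1)
    refine h1.congr_deriv ?_
    have hk : ((k:ℝ)+1) ≠ 0 := by positivity
    simp only [Nat.add_sub_cancel]
    push_cast
    field_simp
  have hint : IntervalIntegrable (fun s => ℓ s * (primInt ℓ s) ^ k) volume 0 t :=
    (hℓ.mul ((continuous_primInt hℓ).pow k)).intervalIntegrable _ _
  have := intervalIntegral.integral_eq_sub_of_hasDerivAt hd hint
  rw [this, primInt_zero]
  norm_num

lemma integral_l_single (hℓ : Continuous ℓ) (b : ℝ) (k : ℕ) (t : ℝ) :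
    ∫ s in (0:ℝ)..t, ℓ s * (b * (primInt ℓ s) ^ k)
      = b * ((primInt ℓ t) ^ (k+1) / (k+1)) := by
  have : (fun s => ℓ s * (b * (primInt ℓ s) ^ k)) = fun s => b * (ℓ s * (primInt ℓ s) ^ k) := by
    funext s; ring
  rw [this, intervalIntegral.integral_const_mul, integral_l_Mpow hℓ]

lemma integral_l_poly (hℓ : Continuous ℓ) (n : ℕ) (b : ℕ → ℝ) (e : ℕ → ℕ) (t : ℝ) :
    ∫ s in (0:ℝ)..t, ℓ s * (∑ m ∈ Finset.range n, b m * (primInt ℓ s) ^ (e m))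
      = ∑ m ∈ Finset.range n, b m * ((primInt ℓ t) ^ (e m + 1) / (e m + 1)) := by
  have h1 : (fun s => ℓ s * (∑ m ∈ Finset.range n, b m * (primInt ℓ s) ^ (e m)))
      = fun s => ∑ m ∈ Finset.range n, b m * (ℓ s * (primInt ℓ s) ^ (e m)) := by
    funext s
    rw [Finset.mul_sum]
    congr 1; ext m; ring
  rw [h1, intervalIntegral.integral_finset_sum]
  · congr 1; ext m
    rw [intervalIntegral.integral_const_mul, integral_l_Mpow hℓ]
  · intro m _
    exact (continuous_const.mul (hℓ.mul ((continuous_primInt hℓ).pow (e m)))).intervalIntegrable _ _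

lemma integral_l_exp_le (hℓ : Continuous ℓ) (hℓ0 : ∀ s, 0 ≤ ℓ s) {c t : ℝ}
    (hc : 0 ≤ c) (ht : 0 ≤ t) :
    ∫ s in (0:ℝ)..t, ℓ s * Real.exp (c * (primInt ℓ s) ^ 2)
      ≤ primInt ℓ t * Real.exp (c * (primInt ℓ t) ^ 2) := by
  have hMc : Continuous (primInt ℓ) := continuous_primInt hℓ
  have hcont1 : Continuous fun s => ℓ s * Real.exp (c * (primInt ℓ s) ^ 2) :=
    hℓ.mul (Real.continuous_exp.comp (continuous_const.mul (hMc.pow 2)))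
  have hcont2 : Continuous fun s =>
      ℓ s * Real.exp (c * (primInt ℓ s) ^ 2) * (1 + 2 * c * (primInt ℓ s) ^ 2) :=
    hcont1.mul (continuous_const.add ((continuous_const.mul (hMc.pow 2))))
  have hd : ∀ s ∈ uIcc (0:ℝ) t,
      HasDerivAt (fun r => primInt ℓ r * Real.exp (c * (primInt ℓ r) ^ 2))
        (ℓ s * Real.exp (c * (primInt ℓ s) ^ 2) * (1 + 2 * c * (primInt ℓ s) ^ 2)) s := by
    intro s _
    have h1 := (hasDerivAt_primInt hℓ s).mul
      (((((hasDerivAt_primInt hℓ s).pow 2).const_mul c)).exp)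
    refine h1.congr_deriv ?_
    simp only [Pi.pow_apply]
    norm_num
    ring
  have heq := intervalIntegral.integral_eq_sub_of_hasDerivAt hd (hcont2.intervalIntegrable _ _)
  have hmono : ∫ s in (0:ℝ)..t, ℓ s * Real.exp (c * (primInt ℓ s) ^ 2)
      ≤ ∫ s in (0:ℝ)..t,
          ℓ s * Real.exp (c * (primInt ℓ s) ^ 2) * (1 + 2 * c * (primInt ℓ s) ^ 2) := by
    apply intervalIntegral.integral_mono_on ht (hcont1.intervalIntegrable _ _)
      (hcont2.intervalIntegrable _ _)
    intro s _
    have h2 : 0 ≤ ℓ s * Real.exp (c * (primInt ℓ s) ^ 2) := by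
      have := hℓ0 s; positivity
    nlinarith [mul_nonneg (mul_nonneg hc (sq_nonneg (primInt ℓ s))) h2]
  rw [heq, primInt_zero] at hmono
  norm_num at hmono
  convert hmono using 2

lemma integral_lM_exp_le (hℓ : Continuous ℓ) (hℓ0 : ∀ s, 0 ≤ ℓ s) {c t : ℝ}
    (hc : 0 ≤ c) (ht : 0 ≤ t) :
    ∫ s in (0:ℝ)..t, ℓ s * primInt ℓ s * Real.exp (c * (primInt ℓ s) ^ 2)
      ≤ (primInt ℓ t) ^ 2 / 2 * Real.exp (c * (primInt ℓ t) ^ 2) := by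
  have hMc : Continuous (primInt ℓ) := continuous_primInt hℓ
  have hcont1 : Continuous fun s => ℓ s * primInt ℓ s * Real.exp (c * (primInt ℓ s) ^ 2) :=
    (hℓ.mul hMc).mul (Real.continuous_exp.comp (continuous_const.mul (hMc.pow 2)))
  have hcont2 : Continuous fun s =>
      ℓ s * primInt ℓ s * Real.exp (c * (primInt ℓ s) ^ 2) * (1 + c * (primInt ℓ s) ^ 2) :=
    hcont1.mul (continuous_const.add ((continuous_const.mul (hMc.pow 2))))
  have hd : ∀ s ∈ uIcc (0:ℝ) t,
      HasDerivAt (fun r => (primInt ℓ r) ^ 2 / 2 * Real.exp (c * (primInt ℓ r) ^ 2))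
        (ℓ s * primInt ℓ s * Real.exp (c * (primInt ℓ s) ^ 2) * (1 + c * (primInt ℓ s) ^ 2)) s := by
    intro s _
    have h1 := (((hasDerivAt_primInt hℓ s).pow 2).div_const 2).mul
      (((((hasDerivAt_primInt hℓ s).pow 2).const_mul c)).exp)
    refine h1.congr_deriv ?_
    simp only [Pi.pow_apply]
    norm_num
    ring
  have heq := intervalIntegral.integral_eq_sub_of_hasDerivAt hd (hcont2.intervalIntegrable _ _)
  have hmono : ∫ s in (0:ℝ)..t, ℓ s * primInt ℓ s * Real.exp (c * (primInt ℓ s) ^ 2)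
      ≤ ∫ s in (0:ℝ)..t,
          ℓ s * primInt ℓ s * Real.exp (c * (primInt ℓ s) ^ 2) * (1 + c * (primInt ℓ s) ^ 2) := by
    apply intervalIntegral.integral_mono_on ht (hcont1.intervalIntegrable _ _)
      (hcont2.intervalIntegrable _ _)
    intro s hs
    have hMnn : 0 ≤ primInt ℓ s := primInt_nonneg hℓ hℓ0 hs.1
    have h2 : 0 ≤ ℓ s * primInt ℓ s * Real.exp (c * (primInt ℓ s) ^ 2) := by
      have := hℓ0 s; positivity
    nlinarith [mul_nonneg (mul_nonneg hc (sq_nonneg (primInt ℓ s))) h2]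
  rw [heq, primInt_zero] at hmono
  norm_num at hmono
  convert hmono using 2

lemma coeff_ineq (m : ℕ) {c A M : ℝ} (hc : 0 ≤ c) (hA : 0 ≤ A) (hM : 0 ≤ M) :
    2*c*(A * (c^m/(m.factorial * (2*m+1))) * (M^(2*m+1+1)/(2*m+1+1)))
      ≤ A * (c^(m+1) * M^(2*(m+1)) / (m+1).factorial) := by
  have hfac : (0:ℝ) < m.factorial := by exact_mod_cast m.factorial_pos
  have hfac1 : (0:ℝ) < (m+1).factorial := by exact_mod_cast (m+1).factorial_pos
  have hnat : (2:ℝ) * (m+1).factorial ≤ m.factorial * ((2*m+1) * (2*m+1+1)) := by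
    have h1 : ((m+1).factorial : ℝ) = (m+1) * m.factorial := by
      rw [Nat.factorial_succ]; push_cast; ring
    rw [h1]
    have h2 : (2:ℝ) * (m+1) ≤ (2*m+1) * (2*m+1+1) := by
      have : (0:ℝ) ≤ m := by positivity
      nlinarith
    nlinarith
  have hexp : 2*(m+1) = 2*m+1+1 := by ring
  rw [hexp]
  have hMp : (0:ℝ) ≤ M^(2*m+1+1) := by positivity
  have hcp : (0:ℝ) ≤ c^(m+1) := by positivity
  have key : 2 * (c^m/(m.factorial * (2*m+1))) * (1/(2*m+1+1)) ≤ c^m / (m+1).factorial := by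
    have h3 : 2 * (c^m/(m.factorial * (2*m+1))) * (1/(2*m+1+1))
        = 2 * c^m / (m.factorial * ((2*m+1) * (2*m+1+1))) := by
      field_simp
    rw [h3, div_le_div_iff₀ (by positivity) hfac1]
    calc 2 * c^m * (m+1).factorial = c^m * (2 * (m+1).factorial) := by ring
      _ ≤ c^m * (m.factorial * ((2*m+1) * (2*m+1+1))) := by
          apply mul_le_mul_of_nonneg_left hnat (by positivity)
      _ = c^m * (m.factorial * ((2*m+1) * (2*m+1+1))) := by ring
  calc 2*c*(A * (c^m/(m.factorial * (2*m+1))) * (M^(2*m+1+1)/(2*m+1+1)))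
      = (A * c * M^(2*m+1+1)) * (2 * (c^m/(m.factorial * (2*m+1))) * (1/(2*m+1+1))) := by ring
    _ ≤ (A * c * M^(2*m+1+1)) * (c^m / (m+1).factorial) := by
        apply mul_le_mul_of_nonneg_left key (by positivity)
    _ = A * ((c^(m+1) * M^(2*m+1+1)) / (m+1).factorial) := by ring

lemma gronwall_core {t₀ c a0 a1 : ℝ} (ht₀ : 0 ≤ t₀) (hc : 0 ≤ c) (ha0 : 0 ≤ a0) (ha1 : 0 ≤ a1)
    {ℓ g : ℝ → ℝ} (hℓ : Continuous ℓ) (hg : Continuous g)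
    (hℓ0 : ∀ s, 0 ≤ ℓ s) (hg0 : ∀ s, 0 ≤ g s)
    (hineq : ∀ t ∈ Icc (0:ℝ) t₀, g t ≤ (a0 + a1 * primInt ℓ t)
        + 2 * c * ∫ s in (0:ℝ)..t, ℓ s * primInt (fun r => g r * ℓ r) s) :
    ∀ t ∈ Icc (0:ℝ) t₀, g t ≤ (a0 + a1 * primInt ℓ t) * Real.exp (c * (primInt ℓ t) ^ 2) := by
  have hMc : Continuous (primInt ℓ) := continuous_primInt hℓ
  have hHc : Continuous (primInt (fun r => g r * ℓ r)) := continuous_primInt (hg.mul hℓ)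
  set M := primInt ℓ with hM
  set H := primInt (fun r => g r * ℓ r) with hH
  set A : ℝ → ℝ := fun r => a0 + a1 * M r with hA
  have hAmono : ∀ r t : ℝ, r ≤ t → A r ≤ A t := by
    intro r t hrt
    have := monotone_primInt hℓ hℓ0 hrt
    simp only [hA]
    nlinarith
  have hMnn : ∀ s : ℝ, 0 ≤ s → 0 ≤ M s := fun s hs => primInt_nonneg hℓ hℓ0 hs
  have hAnn : ∀ s : ℝ, 0 ≤ s → 0 ≤ A s := by
    intro s hs
    have := hMnn s hs
    simp only [hA]
    positivity
  -- choose a uniform bound for g on [0, t₀]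
  obtain ⟨x₀, hx₀, hmax'⟩ := isCompact_Icc.exists_isMaxOn (nonempty_Icc.mpr ht₀)
    (hg.continuousOn (s := Icc (0:ℝ) t₀))
  have hmax : ∀ y ∈ Icc (0:ℝ) t₀, g y ≤ g x₀ := fun y hy => hmax' hy
  set G₀ := g x₀ with hG₀
  have hG₀nn : 0 ≤ G₀ := hg0 x₀
  -- main induction
  have claim : ∀ n : ℕ, ∀ t ∈ Icc (0:ℝ) t₀,
      g t ≤ A t * (∑ m ∈ Finset.range n, c^m * M t ^ (2*m) / m.factorial)
        + G₀ * (c^n * M t ^ (2*n) / n.factorial) := by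
    intro n
    induction n with
    | zero =>
      intro t ht
      simpa using hmax t ht
    | succ n IH =>
      intro t ht
      have htnn : (0:ℝ) ≤ t := ht.1
      -- step 1 : bound H on [0, t]
      have hstep1 : ∀ s ∈ Icc (0:ℝ) t,
          H s ≤ (∑ m ∈ Finset.range n,
              (A t * (c^m/(m.factorial * (2*m+1)))) * M s ^ (2*m+1))
            + (G₀ * (c^n/(n.factorial * (2*n+1)))) * M s ^ (2*n+1) := by
        intro s hs
        have hsnn : (0:ℝ) ≤ s := hs.1
        have hint1 : ∀ r : ℝ, g r * ℓ r ≤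
            ℓ r * ((∑ m ∈ Finset.range n, (A t * (c^m/m.factorial)) * M r ^ (2*m))
              + (G₀ * (c^n/n.factorial)) * M r ^ (2*n)) → True := fun _ _ => trivial
        have hptwise : ∀ r ∈ Icc (0:ℝ) s, g r * ℓ r ≤
            ℓ r * ((∑ m ∈ Finset.range n, (A t * (c^m/m.factorial)) * M r ^ (2*m))
              + (G₀ * (c^n/n.factorial)) * M r ^ (2*n)) := by
          intro r hr
          have hrIcc : r ∈ Icc (0:ℝ) t₀ := ⟨hr.1, hr.2.trans (hs.2.trans ht.2)⟩
          have hIH := IH r hrIcc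
          have hMr : 0 ≤ M r := hMnn r hr.1
          have hsum_nn : 0 ≤ ∑ m ∈ Finset.range n, c^m * M r ^ (2*m) / m.factorial := by
            apply Finset.sum_nonneg
            intro m _
            have : (0:ℝ) < m.factorial := by exact_mod_cast m.factorial_pos
            positivity
          have hAr : A r ≤ A t := hAmono r t (hr.2.trans hs.2)
          have h1 : g r ≤ A t * (∑ m ∈ Finset.range n, c^m * M r ^ (2*m) / m.factorial)
              + G₀ * (c^n * M r ^ (2*n) / n.factorial) := by
            refine hIH.trans ?_
            have := mul_le_mul_of_nonneg_right hAr hsum_nn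
            linarith
          have h2 : A t * (∑ m ∈ Finset.range n, c^m * M r ^ (2*m) / m.factorial)
              + G₀ * (c^n * M r ^ (2*n) / n.factorial)
              = (∑ m ∈ Finset.range n, (A t * (c^m/m.factorial)) * M r ^ (2*m))
              + (G₀ * (c^n/n.factorial)) * M r ^ (2*n) := by
            rw [Finset.mul_sum]
            congr 1
            · congr 1; ext m; ring
            · ring
          calc g r * ℓ r = ℓ r * g r := by ring
            _ ≤ ℓ r * (A t * (∑ m ∈ Finset.range n, c^m * M r ^ (2*m) / m.factorial)
                + G₀ * (c^n * M r ^ (2*n) / n.factorial)) :=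
                mul_le_mul_of_nonneg_left h1 (hℓ0 r)
            _ = ℓ r * ((∑ m ∈ Finset.range n, (A t * (c^m/m.factorial)) * M r ^ (2*m))
                + (G₀ * (c^n/n.factorial)) * M r ^ (2*n)) := by rw [h2]
        have hcont_rhs : Continuous fun r =>
            ℓ r * ((∑ m ∈ Finset.range n, (A t * (c^m/m.factorial)) * M r ^ (2*m))
              + (G₀ * (c^n/n.factorial)) * M r ^ (2*n)) := by
          apply hℓ.mul
          apply Continuous.add
          · apply continuous_finset_sum
            intro m _
            exact continuous_const.mul (hMc.pow _)
          · exact continuous_const.mul (hMc.pow _)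
        have hHs : H s ≤ ∫ r in (0:ℝ)..s,
            ℓ r * ((∑ m ∈ Finset.range n, (A t * (c^m/m.factorial)) * M r ^ (2*m))
              + (G₀ * (c^n/n.factorial)) * M r ^ (2*n)) := by
          apply intervalIntegral.integral_mono_on hsnn
            ((hg.mul hℓ).intervalIntegrable _ _) (hcont_rhs.intervalIntegrable _ _) hptwise
        refine hHs.trans ?_
        have hsplit : ∫ r in (0:ℝ)..s,
            ℓ r * ((∑ m ∈ Finset.range n, (A t * (c^m/m.factorial)) * M r ^ (2*m))
              + (G₀ * (c^n/n.factorial)) * M r ^ (2*n))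
            = (∫ r in (0:ℝ)..s, ℓ r * (∑ m ∈ Finset.range n,
                (A t * (c^m/m.factorial)) * M r ^ (2*m)))
              + ∫ r in (0:ℝ)..s, ℓ r * ((G₀ * (c^n/n.factorial)) * M r ^ (2*n)) := by
          rw [← intervalIntegral.integral_add]
          · congr 1; ext r; ring
          · apply Continuous.intervalIntegrable
            apply hℓ.mul
            apply continuous_finset_sum
            intro m _
            exact continuous_const.mul (hMc.pow _)
          · apply Continuous.intervalIntegrable
            exact hℓ.mul (continuous_const.mul (hMc.pow _))
        rw [hsplit, integral_l_poly hℓ n _ (fun m => 2*m) s, integral_l_single hℓ _ (2*n) s]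
        apply add_le_add
        · apply le_of_eq
          congr 1
          ext m
          push_cast
          field_simp
          rfl
        · apply le_of_eq
          push_cast
          field_simp
          rfl
      -- step 2 : outer integral
      have hPb : Continuous fun s : ℝ =>
          (∑ m ∈ Finset.range n, (A t * (c^m/(m.factorial * (2*m+1)))) * M s ^ (2*m+1))
            + (G₀ * (c^n/(n.factorial * (2*n+1)))) * M s ^ (2*n+1) := by
        apply Continuous.add
        · apply continuous_finset_sum
          intro m _
          exact continuous_const.mul (hMc.pow _)
        · exact continuous_const.mul (hMc.pow _)
      have hmono2 : ∫ s in (0:ℝ)..t, ℓ s * H s ≤ ∫ s in (0:ℝ)..t,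
          ℓ s * ((∑ m ∈ Finset.range n, (A t * (c^m/(m.factorial * (2*m+1)))) * M s ^ (2*m+1))
            + (G₀ * (c^n/(n.factorial * (2*n+1)))) * M s ^ (2*n+1)) := by
        apply intervalIntegral.integral_mono_on htnn
          ((hℓ.mul hHc).intervalIntegrable _ _) ((hℓ.mul hPb).intervalIntegrable _ _)
        intro s hs
        exact mul_le_mul_of_nonneg_left (hstep1 s hs) (hℓ0 s)
      have hsplit2 : ∫ s in (0:ℝ)..t,
          ℓ s * ((∑ m ∈ Finset.range n, (A t * (c^m/(m.factorial * (2*m+1)))) * M s ^ (2*m+1))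
            + (G₀ * (c^n/(n.factorial * (2*n+1)))) * M s ^ (2*n+1))
          = (∫ s in (0:ℝ)..t, ℓ s * (∑ m ∈ Finset.range n,
              (A t * (c^m/(m.factorial * (2*m+1)))) * M s ^ (2*m+1)))
            + ∫ s in (0:ℝ)..t, ℓ s * ((G₀ * (c^n/(n.factorial * (2*n+1)))) * M s ^ (2*n+1)) := by
        rw [← intervalIntegral.integral_add]
        · congr 1; ext s; ring
        · apply Continuous.intervalIntegrable
          apply hℓ.mul
          apply continuous_finset_sum
          intro m _
          exact continuous_const.mul (hMc.pow _)
        · apply Continuous.intervalIntegrable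
          exact hℓ.mul (continuous_const.mul (hMc.pow _))
      have hval : ∫ s in (0:ℝ)..t,
          ℓ s * ((∑ m ∈ Finset.range n, (A t * (c^m/(m.factorial * (2*m+1)))) * M s ^ (2*m+1))
            + (G₀ * (c^n/(n.factorial * (2*n+1)))) * M s ^ (2*n+1))
          = (∑ m ∈ Finset.range n,
              (A t * (c^m/(m.factorial * (2*m+1)))) * (M t ^ (2*m+1+1)/(2*m+1+1)))
            + (G₀ * (c^n/(n.factorial * (2*n+1)))) * (M t ^ (2*n+1+1)/(2*n+1+1)) := by
        rw [hsplit2, integral_l_poly hℓ n _ (fun m => 2*m+1) t,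
          integral_l_single hℓ _ (2*n+1) t]
        congr 1
        · apply Finset.sum_congr rfl
          intro m _
          push_cast
          ring
        · push_cast
          ring
      have hfinal1 : 2*c*(∑ m ∈ Finset.range n,
            (A t * (c^m/(m.factorial * (2*m+1)))) * (M t ^ (2*m+1+1)/(2*m+1+1)))
          ≤ ∑ m ∈ Finset.range n, A t * (c^(m+1) * M t ^ (2*(m+1)) / (m+1).factorial) := by
        rw [Finset.mul_sum]
        apply Finset.sum_le_sum
        intro m _
        exact coeff_ineq m hc (hAnn t htnn) (hMnn t htnn)
      have hfinal2 : 2*c*((G₀ * (c^n/(n.factorial * (2*n+1)))) * (M t ^ (2*n+1+1)/(2*n+1+1)))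
          ≤ G₀ * (c^(n+1) * M t ^ (2*(n+1)) / (n+1).factorial) :=
        coeff_ineq n hc hG₀nn (hMnn t htnn)
      have hsum_eq : A t + ∑ m ∈ Finset.range n,
            A t * (c^(m+1) * M t ^ (2*(m+1)) / (m+1).factorial)
          = A t * ∑ m ∈ Finset.range (n+1), c^m * M t ^ (2*m) / m.factorial := by
        rw [Finset.sum_range_succ' (fun m => c^m * M t ^ (2*m) / (m.factorial : ℝ)) n]
        have h0 : c^0 * M t ^ (2*0) / ((0:ℕ).factorial : ℝ) = 1 := by norm_num
        rw [mul_add, h0, mul_one, Finset.mul_sum, add_comm (A t)]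
      have hineqt := hineq t ht
      have h2c : (0:ℝ) ≤ 2*c := by linarith
      have hchain : g t ≤ A t + 2*c*((∑ m ∈ Finset.range n,
            (A t * (c^m/(m.factorial * (2*m+1)))) * (M t ^ (2*m+1+1)/(2*m+1+1)))
            + (G₀ * (c^n/(n.factorial * (2*n+1)))) * (M t ^ (2*n+1+1)/(2*n+1+1))) := by
        rw [← hval]
        have := mul_le_mul_of_nonneg_left (hmono2.trans (le_of_eq rfl)) h2c
        simp only [hA] at hineqt ⊢
        linarith
      rw [mul_add] at hchain
      have hG₀term : G₀ * (c^(n+1) * M t ^ (2*(n+1)) / (n+1).factorial)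
          = G₀ * (c^(n+1) * M t ^ (2*(n+1)) / (n+1).factorial) := rfl
      calc g t ≤ A t + (2*c*(∑ m ∈ Finset.range n,
            (A t * (c^m/(m.factorial * (2*m+1)))) * (M t ^ (2*m+1+1)/(2*m+1+1)))
            + 2*c*((G₀ * (c^n/(n.factorial * (2*n+1)))) * (M t ^ (2*n+1+1)/(2*n+1+1)))) := by
            linarith
        _ ≤ A t + ((∑ m ∈ Finset.range n,
              A t * (c^(m+1) * M t ^ (2*(m+1)) / (m+1).factorial))
            + G₀ * (c^(n+1) * M t ^ (2*(n+1)) / (n+1).factorial)) := by linarith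
        _ = A t * (∑ m ∈ Finset.range (n+1), c^m * M t ^ (2*m) / m.factorial)
            + G₀ * (c^(n+1) * M t ^ (2*(n+1)) / (n+1).factorial) := by
            rw [← hsum_eq]; ring
  -- pass to the limit
  intro t ht
  have htnn : (0:ℝ) ≤ t := ht.1
  have hx : 0 ≤ c * M t ^ 2 := by
    have := hMnn t htnn
    positivity
  have hterm : ∀ n : ℕ, g t ≤ A t * Real.exp (c * M t ^ 2)
      + G₀ * ((c * M t ^ 2)^n / n.factorial) := by
    intro n
    have hclaim := claim n t ht
    have hsum_le : (∑ m ∈ Finset.range n, c^m * M t ^ (2*m) / m.factorial)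
        ≤ Real.exp (c * M t ^ 2) := by
      have h1 : ∀ m : ℕ, c^m * M t ^ (2*m) = (c * M t ^ 2)^m := by
        intro m
        rw [mul_pow, pow_mul]
      calc (∑ m ∈ Finset.range n, c^m * M t ^ (2*m) / m.factorial)
          = ∑ m ∈ Finset.range n, (c * M t ^ 2)^m / m.factorial := by
            apply Finset.sum_congr rfl
            intro m _
            rw [h1 m]
        _ ≤ Real.exp (c * M t ^ 2) := Real.sum_le_exp_of_nonneg hx n
    have hA_nn := hAnn t htnn
    have h2 : c^n * M t ^ (2*n) / n.factorial = (c * M t ^ 2)^n / n.factorial := by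
      rw [mul_pow, pow_mul]
    refine hclaim.trans ?_
    rw [h2]
    have := mul_le_mul_of_nonneg_left hsum_le hA_nn
    linarith
  have hlim : Filter.Tendsto (fun n : ℕ => A t * Real.exp (c * M t ^ 2)
      + G₀ * ((c * M t ^ 2)^n / n.factorial)) Filter.atTop
      (nhds (A t * Real.exp (c * M t ^ 2))) := by
    have h1 : Filter.Tendsto (fun n : ℕ => (c * M t ^ 2)^n / n.factorial)
        Filter.atTop (nhds 0) := FloorSemiring.tendsto_pow_div_factorial_atTop _
    have h2 := (h1.const_mul G₀).const_add (A t * Real.exp (c * M t ^ 2))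
    simpa using h2
  exact ge_of_tendsto' hlim hterm

lemma final_integral {t₀ c a0 a1 : ℝ} (ht₀ : 0 ≤ t₀) (hc : 0 ≤ c) (ha0 : 0 ≤ a0) (ha1 : 0 ≤ a1)
    {ℓ g : ℝ → ℝ} (hℓ : Continuous ℓ) (hg : Continuous g)
    (hℓ0 : ∀ s, 0 ≤ ℓ s)
    (hbound : ∀ s ∈ Icc (0:ℝ) t₀,
      g s ≤ (a0 + a1 * primInt ℓ s) * Real.exp (c * (primInt ℓ s)^2)) :
    ∫ r in (0:ℝ)..t₀, g r * ℓ r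
      ≤ (a0 * primInt ℓ t₀ + a1 * (primInt ℓ t₀)^2/2) * Real.exp (c * (primInt ℓ t₀)^2) := by
  have hMc : Continuous (primInt ℓ) := continuous_primInt hℓ
  have hec : Continuous fun s => Real.exp (c * (primInt ℓ s)^2) :=
    Real.continuous_exp.comp (continuous_const.mul (hMc.pow 2))
  have hcont2 : Continuous fun s => a0 * (ℓ s * Real.exp (c * (primInt ℓ s)^2))
      + a1 * (ℓ s * primInt ℓ s * Real.exp (c * (primInt ℓ s)^2)) :=
    (continuous_const.mul (hℓ.mul hec)).add
      (continuous_const.mul ((hℓ.mul hMc).mul hec))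
  have h1 : ∫ r in (0:ℝ)..t₀, g r * ℓ r ≤ ∫ r in (0:ℝ)..t₀,
      (a0 * (ℓ r * Real.exp (c * (primInt ℓ r)^2))
        + a1 * (ℓ r * primInt ℓ r * Real.exp (c * (primInt ℓ r)^2))) := by
    apply intervalIntegral.integral_mono_on ht₀
      ((hg.mul hℓ).intervalIntegrable _ _) (hcont2.intervalIntegrable _ _)
    intro r hr
    have h2 := hbound r hr
    have h3 := mul_le_mul_of_nonneg_left h2 (hℓ0 r)
    calc g r * ℓ r = ℓ r * g r := by ring
      _ ≤ ℓ r * ((a0 + a1 * primInt ℓ r) * Real.exp (c * (primInt ℓ r)^2)) := h3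
      _ = a0 * (ℓ r * Real.exp (c * (primInt ℓ r)^2))
          + a1 * (ℓ r * primInt ℓ r * Real.exp (c * (primInt ℓ r)^2)) := by ring
  have h2 : ∫ r in (0:ℝ)..t₀,
      (a0 * (ℓ r * Real.exp (c * (primInt ℓ r)^2))
        + a1 * (ℓ r * primInt ℓ r * Real.exp (c * (primInt ℓ r)^2)))
      = a0 * (∫ r in (0:ℝ)..t₀, ℓ r * Real.exp (c * (primInt ℓ r)^2))
        + a1 * ∫ r in (0:ℝ)..t₀, ℓ r * primInt ℓ r * Real.exp (c * (primInt ℓ r)^2) := by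
    rw [intervalIntegral.integral_add, intervalIntegral.integral_const_mul,
      intervalIntegral.integral_const_mul]
    · exact (continuous_const.mul (hℓ.mul hec)).intervalIntegrable _ _
    · exact (continuous_const.mul ((hℓ.mul hMc).mul hec)).intervalIntegrable _ _
  have h3 := integral_l_exp_le hℓ hℓ0 hc ht₀
  have h4 := integral_lM_exp_le hℓ hℓ0 hc ht₀
  calc ∫ r in (0:ℝ)..t₀, g r * ℓ r
      ≤ a0 * (∫ r in (0:ℝ)..t₀, ℓ r * Real.exp (c * (primInt ℓ r)^2))
        + a1 * ∫ r in (0:ℝ)..t₀, ℓ r * primInt ℓ r * Real.exp (c * (primInt ℓ r)^2) := by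
        rw [← h2]; exact h1
    _ ≤ a0 * (primInt ℓ t₀ * Real.exp (c * (primInt ℓ t₀)^2))
        + a1 * ((primInt ℓ t₀)^2/2 * Real.exp (c * (primInt ℓ t₀)^2)) := by
        have := mul_le_mul_of_nonneg_left h3 ha0
        have := mul_le_mul_of_nonneg_left h4 ha1
        linarith
    _ = (a0 * primInt ℓ t₀ + a1 * (primInt ℓ t₀)^2/2) * Real.exp (c * (primInt ℓ t₀)^2) := by
        ring


lemma continuous_frob_comp {m n : ℕ} {F : ℝ → Matrix (Fin m) (Fin n) ℝ}
    (h : ∀ i j, Continuous fun s => F s i j) : Continuous fun s => frob (F s) := by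
  unfold frob
  exact Real.continuous_sqrt.comp
    (continuous_finset_sum _ fun i _ => continuous_finset_sum _ fun j _ => (h i j).pow 2)

lemma continuous_mseLoss_comp {N d0 d1 d2 : ℕ} (X : Matrix (Fin N) (Fin d0) ℝ)
    (Y : Matrix (Fin N) (Fin d2) ℝ) {Wf : ℝ → Matrix (Fin d0) (Fin d1) ℝ}
    {Vf : ℝ → Matrix (Fin d1) (Fin d2) ℝ}
    (hW : ∀ i j, Continuous fun s => Wf s i j) (hV : ∀ i j, Continuous fun s => Vf s i j) :
    Continuous fun s => mseLoss X Y (Wf s) (Vf s) := by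
  unfold mseLoss
  apply continuous_const.mul
  apply Continuous.pow
  apply continuous_frob_comp
  intro i j
  simp only [Matrix.sub_apply, Matrix.mul_apply, Matrix.map_apply, relu]
  apply continuous_const.sub
  apply continuous_finset_sum
  intro k _
  apply Continuous.mul ?_ (hV k j)
  have h1 : Continuous fun s => ∑ l, X i l * Wf s l k :=
    continuous_finset_sum _ fun l _ => continuous_const.mul (hW l k)
  exact (continuous_id.max continuous_const).comp h1


/-- Lemma: refined increment bound for the first-layer trajectory. -/
theorem statement4
    (N d0 d1 d2 : ℕ) (hN : 0 < N) (hd0 : 0 < d0) (hd1 : 0 < d1) (hd2 : 0 < d2)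
    (X : Matrix (Fin N) (Fin d0) ℝ) (Y : Matrix (Fin N) (Fin d2) ℝ)
    (T : ℝ≥0∞) (hT : 0 < T)
    (W : ℝ → Matrix (Fin d0) (Fin d1) ℝ) (V : ℝ → Matrix (Fin d1) (Fin d2) ℝ)
    (W' : ℝ → Matrix (Fin d0) (Fin d1) ℝ) (V' : ℝ → Matrix (Fin d1) (Fin d2) ℝ)
    (L : ℝ → ℝ) (hL : L = fun s => mseLoss X Y (W s) (V s))
    (hWac : ∀ t : ℝ, 0 ≤ t → ENNReal.ofReal t < T → ∀ i j,
      IntervalIntegrable (fun s => W' s i j) volume 0 t ∧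
      W t i j - W 0 i j = ∫ s in (0:ℝ)..t, W' s i j)
    (hVac : ∀ t : ℝ, 0 ≤ t → ENNReal.ofReal t < T → ∀ i j,
      IntervalIntegrable (fun s => V' s i j) volume 0 t ∧
      V t i j - V 0 i j = ∫ s in (0:ℝ)..t, V' s i j)
    (hW' : ∀ᵐ s ∂volume, 0 ≤ s → ENNReal.ofReal s < T →
      frob (W' s) ≤ opNorm X * frob (V s) * Real.sqrt (2 * L s))
    (hV' : ∀ᵐ s ∂volume, 0 ≤ s → ENNReal.ofReal s < T →
      frob (V' s) ≤ opNorm X * frob (W s) * Real.sqrt (2 * L s))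
    (c₁ c₂ c : ℝ)
    (hc₁ : c₁ = 2 * Real.sqrt 2 * opNorm X ^ 2 * frob (V 0))
    (hc₂ : c₂ = 2 * opNorm X ^ 3 * frob (W 0))
    (hc : c = opNorm X ^ 2) :
    ∀ t : ℝ, 0 ≤ t → ENNReal.ofReal t < T →
      opNorm X * frob (W t - W 0) ≤
        (1 / 2) * (c₁ * (∫ s in (0:ℝ)..t, Real.sqrt (L s))
            + c₂ * (∫ s in (0:ℝ)..t, Real.sqrt (L s)) ^ 2) *
          Real.exp (c * (∫ s in (0:ℝ)..t, Real.sqrt (L s)) ^ 2) := by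
  intro t ht htT
  set a := opNorm X with ha_def
  have ha : 0 ≤ a := norm_nonneg _
  have hsa : 0 ≤ Real.sqrt 2 * a := mul_nonneg (Real.sqrt_nonneg _) ha
  have h22 : Real.sqrt 2 * Real.sqrt 2 = 2 := Real.mul_self_sqrt (by norm_num)
  set proj : ℝ → ℝ := fun s => max 0 (min s t) with hproj_def
  have hprojc : Continuous proj := continuous_const.max (continuous_id.min continuous_const)
  have hproj_mem : ∀ s, proj s ∈ Icc (0:ℝ) t := by
    intro s
    exact ⟨le_max_left _ _, max_le ht (min_le_right _ _)⟩
  have hproj_eq : ∀ s ∈ Icc (0:ℝ) t, proj s = s := by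
    intro s hs
    simp only [hproj_def]
    rw [min_eq_left hs.2, max_eq_right hs.1]
  have hsub_T : ∀ s ∈ Icc (0:ℝ) t, ENNReal.ofReal s < T := fun s hs =>
    lt_of_le_of_lt (ENNReal.ofReal_le_ofReal hs.2) htT
  -- entrywise continuity of W and V on [0,t]
  have hWcont : ∀ i j, ContinuousOn (fun s => W s i j) (Icc (0:ℝ) t) := by
    intro i j
    have hint := (hWac t ht htT i j).1
    have hprim : ContinuousOn (fun s => ∫ r in (0:ℝ)..s, W' r i j) (Icc (0:ℝ) t) := by
      have h0mem : (0:ℝ) ∈ uIcc (0:ℝ) t := by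
        rw [uIcc_of_le ht]; exact ⟨le_refl _, ht⟩
      have := intervalIntegral.continuousOn_primitive_interval' hint h0mem
      rwa [uIcc_of_le ht] at this
    apply (continuousOn_const.add hprim).congr
    intro s hs
    have hftc := (hWac s hs.1 (hsub_T s hs) i j).2
    show W s i j = W 0 i j + ∫ r in (0:ℝ)..s, W' r i j
    linarith
  have hVcont : ∀ i j, ContinuousOn (fun s => V s i j) (Icc (0:ℝ) t) := by
    intro i j
    have hint := (hVac t ht htT i j).1
    have hprim : ContinuousOn (fun s => ∫ r in (0:ℝ)..s, V' r i j) (Icc (0:ℝ) t) := by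
      have h0mem : (0:ℝ) ∈ uIcc (0:ℝ) t := by
        rw [uIcc_of_le ht]; exact ⟨le_refl _, ht⟩
      have := intervalIntegral.continuousOn_primitive_interval' hint h0mem
      rwa [uIcc_of_le ht] at this
    apply (continuousOn_const.add hprim).congr
    intro s hs
    have hftc := (hVac s hs.1 (hsub_T s hs) i j).2
    show V s i j = V 0 i j + ∫ r in (0:ℝ)..s, V' r i j
    linarith
  have hWp : ∀ i j, Continuous fun s => W (proj s) i j := fun i j =>
    (hWcont i j).comp_continuous hprojc hproj_mem
  have hVp : ∀ i j, Continuous fun s => V (proj s) i j := fun i j =>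
    (hVcont i j).comp_continuous hprojc hproj_mem
  set gf : ℝ → ℝ := fun s => frob (V (proj s)) with hgf_def
  set wf : ℝ → ℝ := fun s => frob (W (proj s)) with hwf_def
  have hgc : Continuous gf := continuous_frob_comp hVp
  have hwc : Continuous wf := continuous_frob_comp hWp
  set ℓf : ℝ → ℝ := fun s => Real.sqrt (L (proj s)) with hlf_def
  have hLc : Continuous fun s => L (proj s) := by
    rw [hL]
    exact continuous_mseLoss_comp X Y hWp hVp
  have hlc : Continuous ℓf := Real.continuous_sqrt.comp hLc
  have hl0 : ∀ s, 0 ≤ ℓf s := fun s => Real.sqrt_nonneg _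
  have hg0 : ∀ s, 0 ≤ gf s := fun s => frob_nonneg _
  have hHc : Continuous (primInt (fun r => gf r * ℓf r)) := continuous_primInt (hgc.mul hlc)
  -- increment bound for W
  have hIW : ∀ t' ∈ Icc (0:ℝ) t, frob (W t' - W 0)
      ≤ (Real.sqrt 2 * a) * primInt (fun r => gf r * ℓf r) t' := by
    intro t' ht'
    have h₁ : frob (W t' - W 0) ≤ ∫ s in (0:ℝ)..t', (Real.sqrt 2 * a) * (gf s * ℓf s) := by
      apply frob_sub_le_integral W W' t' ht'.1
        (fun i j => (hWac t' ht'.1 (hsub_T t' ht') i j).1)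
        (fun i j => (hWac t' ht'.1 (hsub_T t' ht') i j).2)
        _ ((continuous_const.mul (hgc.mul hlc)).intervalIntegrable _ _)
      filter_upwards [ae_restrict_of_ae hW', ae_restrict_mem measurableSet_Icc] with s hs hsIcc
      have hsIcct : s ∈ Icc (0:ℝ) t := ⟨hsIcc.1, hsIcc.2.trans ht'.2⟩
      have hb := hs hsIcc.1 (hsub_T s hsIcct)
      have hVs : frob (V s) = gf s := by
        simp only [hgf_def]
        rw [hproj_eq s hsIcct]
      have hsqrt : Real.sqrt (2 * L s) = Real.sqrt 2 * ℓf s := by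
        rw [Real.sqrt_mul (by norm_num : (0:ℝ) ≤ 2)]
        simp only [hlf_def]
        rw [hproj_eq s hsIcct]
      calc frob (W' s) ≤ a * frob (V s) * Real.sqrt (2 * L s) := hb
        _ = (Real.sqrt 2 * a) * (gf s * ℓf s) := by rw [hVs, hsqrt]; ring
    rw [intervalIntegral.integral_const_mul] at h₁
    exact h₁
  -- increment bound for V
  have hIV : ∀ t' ∈ Icc (0:ℝ) t, frob (V t' - V 0)
      ≤ ∫ s in (0:ℝ)..t', (Real.sqrt 2 * a) * (wf s * ℓf s) := by
    intro t' ht'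
    apply frob_sub_le_integral V V' t' ht'.1
      (fun i j => (hVac t' ht'.1 (hsub_T t' ht') i j).1)
      (fun i j => (hVac t' ht'.1 (hsub_T t' ht') i j).2)
      _ ((continuous_const.mul (hwc.mul hlc)).intervalIntegrable _ _)
    filter_upwards [ae_restrict_of_ae hV', ae_restrict_mem measurableSet_Icc] with s hs hsIcc
    have hsIcct : s ∈ Icc (0:ℝ) t := ⟨hsIcc.1, hsIcc.2.trans ht'.2⟩
    have hb := hs hsIcc.1 (hsub_T s hsIcct)
    have hWs : frob (W s) = wf s := by
      simp only [hwf_def]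
      rw [hproj_eq s hsIcct]
    have hsqrt : Real.sqrt (2 * L s) = Real.sqrt 2 * ℓf s := by
      rw [Real.sqrt_mul (by norm_num : (0:ℝ) ≤ 2)]
      simp only [hlf_def]
      rw [hproj_eq s hsIcct]
    calc frob (V' s) ≤ a * frob (W s) * Real.sqrt (2 * L s) := hb
      _ = (Real.sqrt 2 * a) * (wf s * ℓf s) := by rw [hWs, hsqrt]; ring
  -- the integral inequality for gf
  have hineq : ∀ t' ∈ Icc (0:ℝ) t,
      gf t' ≤ (frob (V 0) + (Real.sqrt 2 * a * frob (W 0)) * primInt ℓf t')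
        + 2 * a^2 * ∫ s in (0:ℝ)..t', ℓf s * primInt (fun r => gf r * ℓf r) s := by
    intro t' ht'
    have h0 : gf t' = frob (V t') := by
      simp only [hgf_def]
      rw [hproj_eq t' ht']
    have hdecomp : V t' = V 0 + (V t' - V 0) := by abel
    have htri : frob (V t') ≤ frob (V 0) + frob (V t' - V 0) := by
      calc frob (V t') = frob (V 0 + (V t' - V 0)) := by rw [← hdecomp]
        _ ≤ frob (V 0) + frob (V t' - V 0) := frob_add_le _ _
    have h1 := hIV t' ht'
    have h2 : ∫ s in (0:ℝ)..t', (Real.sqrt 2 * a) * (wf s * ℓf s)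
        ≤ ∫ s in (0:ℝ)..t',
          ((Real.sqrt 2 * a * frob (W 0)) * ℓf s
            + (2 * a^2) * (ℓf s * primInt (fun r => gf r * ℓf r) s)) := by
      apply intervalIntegral.integral_mono_on ht'.1
        ((continuous_const.mul (hwc.mul hlc)).intervalIntegrable _ _)
        (((continuous_const.mul hlc).add
          (continuous_const.mul (hlc.mul hHc))).intervalIntegrable _ _)
      intro s hs
      have hsIcct : s ∈ Icc (0:ℝ) t := ⟨hs.1, hs.2.trans ht'.2⟩
      have hwfs : wf s ≤ frob (W 0) + (Real.sqrt 2 * a) * primInt (fun r => gf r * ℓf r) s := by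
        have hweq : wf s = frob (W s) := by
          simp only [hwf_def]
          rw [hproj_eq s hsIcct]
        have hdecomp2 : W s = W 0 + (W s - W 0) := by abel
        have htri2 : frob (W s) ≤ frob (W 0) + frob (W s - W 0) := by
          calc frob (W s) = frob (W 0 + (W s - W 0)) := by rw [← hdecomp2]
            _ ≤ _ := frob_add_le _ _
        have := hIW s hsIcct
        rw [hweq]
        linarith
      have hstep : (Real.sqrt 2 * a) * (wf s * ℓf s)
          ≤ (Real.sqrt 2 * a) * ((frob (W 0)
              + (Real.sqrt 2 * a) * primInt (fun r => gf r * ℓf r) s) * ℓf s) := by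
        apply mul_le_mul_of_nonneg_left _ hsa
        exact mul_le_mul_of_nonneg_right hwfs (hl0 s)
      refine hstep.trans (le_of_eq ?_)
      simp only [Pi.add_apply, Pi.mul_apply]
      linear_combination (a^2 * ℓf s * primInt (fun r => gf r * ℓf r) s) * h22
    have h3 : ∫ s in (0:ℝ)..t',
        ((Real.sqrt 2 * a * frob (W 0)) * ℓf s
          + (2 * a^2) * (ℓf s * primInt (fun r => gf r * ℓf r) s))
        = (Real.sqrt 2 * a * frob (W 0)) * primInt ℓf t'
          + (2 * a^2) * ∫ s in (0:ℝ)..t', ℓf s * primInt (fun r => gf r * ℓf r) s := by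
      rw [intervalIntegral.integral_add (f := fun s => (Real.sqrt 2 * a * frob (W 0)) * ℓf s)
        (g := fun s => (2 * a^2) * (ℓf s * primInt (fun r => gf r * ℓf r) s))
        ((continuous_const.mul hlc).intervalIntegrable _ _)
        ((continuous_const.mul (hlc.mul hHc)).intervalIntegrable _ _),
        intervalIntegral.integral_const_mul, intervalIntegral.integral_const_mul]
      rfl
    rw [h0]
    linarith
  -- Gronwall
  have hc2 : (0:ℝ) ≤ a^2 := sq_nonneg a
  have ha1nn : 0 ≤ Real.sqrt 2 * a * frob (W 0) := mul_nonneg hsa (frob_nonneg _)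
  have hGron := gronwall_core ht hc2 (frob_nonneg (V 0)) ha1nn hlc hgc hl0 hg0 hineq
  have hFin := final_integral ht hc2 (frob_nonneg (V 0)) ha1nn hlc hgc hl0 hGron
  have hIWt := hIW t ⟨ht, le_refl t⟩
  have hIeq : (∫ s in (0:ℝ)..t, Real.sqrt (L s)) = primInt ℓf t := by
    apply intervalIntegral.integral_congr
    intro s hs
    rw [uIcc_of_le ht] at hs
    simp only [hlf_def]
    rw [hproj_eq s hs]
  rw [hIeq, hc₁, hc₂, hc]
  have h5 : a * frob (W t - W 0)
      ≤ a * ((Real.sqrt 2 * a) * primInt (fun r => gf r * ℓf r) t) :=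
    mul_le_mul_of_nonneg_left hIWt ha
  have h6 : primInt (fun r => gf r * ℓf r) t
      ≤ (frob (V 0) * primInt ℓf t + (Real.sqrt 2 * a * frob (W 0)) * (primInt ℓf t)^2/2)
        * Real.exp (a^2 * (primInt ℓf t)^2) := hFin
  have h7 : a * ((Real.sqrt 2 * a) * primInt (fun r => gf r * ℓf r) t)
      ≤ a * ((Real.sqrt 2 * a) *
        ((frob (V 0) * primInt ℓf t + (Real.sqrt 2 * a * frob (W 0)) * (primInt ℓf t)^2/2)
          * Real.exp (a^2 * (primInt ℓf t)^2))) :=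
    mul_le_mul_of_nonneg_left (mul_le_mul_of_nonneg_left h6 hsa) ha
  have heq : a * ((Real.sqrt 2 * a) *
        ((frob (V 0) * primInt ℓf t + (Real.sqrt 2 * a * frob (W 0)) * (primInt ℓf t)^2/2)
          * Real.exp (a^2 * (primInt ℓf t)^2)))
      = 1/2 * (2 * Real.sqrt 2 * a^2 * frob (V 0) * primInt ℓf t
          + 2 * a^3 * frob (W 0) * (primInt ℓf t)^2)
        * Real.exp (a^2 * (primInt ℓf t)^2) := by
    linear_combination (a^3 * frob (W 0) * (primInt ℓf t)^2
      * Real.exp (a^2 * (primInt ℓf t)^2) / 2) * h22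
  linarith
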